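/- Let (S₁,S₂,I₁,I₂,R₁,R₂,D₁,D₂) be a solution of the two-group active-population SIRD model on [0,∞) with initial data Sᵢ₀ := Sᵢ(0) > 0, Iᵢ₀ := Iᵢ(0) ≥ 0, Rᵢ₀ := Rᵢ(0) ≥ 0, all compartments remaining nonnegative and bounded, Sᵢ(t) > 0 and Nᵢ(t) > 0 for all t ≥ 0, and suppose the compartment limits as t → ∞ exist with lim Iᵢ(t) = 0. Then the final susceptible state S^∞ = (S₁^∞, S₂^∞), Sᵢ^∞ = lim_{t→∞} Sᵢ(t), satisfies S^∞ = T(S^∞) and 0 < Sᵢ^∞ ≤ Sᵢ₀ for i = 1,2; that is, S^∞ is a fixed point of the map T in [0,S₁₀]×[0,S₂₀]. -/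

import Mathlib

open Filter

noncomputable def Tmap (β11 β12 β21 β22 μ1 μ2 S10 S20 ε1 ε2 Z1 Z2 N10 N20 : ℝ) :
    ℝ × ℝ → ℝ × ℝ := fun X =>
  (S10 * ((ε1 * X.1 + Z1) / N10) ^ (β11 / μ1) * ((ε2 * X.2 + Z2) / N20) ^ (β12 / μ2),
   S20 * ((ε1 * X.1 + Z1) / N10) ^ (β21 / μ1) * ((ε2 * X.2 + Z2) / N20) ^ (β22 / μ2))

lemma sird_const {f : ℝ → ℝ} (hf : ∀ t ≥ (0:ℝ), HasDerivAt f 0 t) :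
    ∀ t ≥ (0:ℝ), f t = f 0 := by
  intro t ht
  have H := constant_of_has_deriv_right_zero (f := f) (a := 0) (b := t)
    (fun x hx => (hf x hx.1).continuousAt.continuousWithinAt)
    (fun x hx => (hf x hx.1).hasDerivWithinAt)
  exact H t (Set.mem_Icc.2 ⟨ht, le_rfl⟩)

lemma sird_tendsto_const {f : ℝ → ℝ} {c : ℝ} (h : ∀ t ≥ (0:ℝ), f t = c) :
    Tendsto f atTop (nhds c) := by
  refine Tendsto.congr' ?_ (tendsto_const_nhds : Tendsto (fun _ : ℝ => c) atTop (nhds c))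
  filter_upwards [eventually_ge_atTop (0:ℝ)] with t ht using (h t ht).symm

theorem stmt_7
    (β11 β12 β21 β22 γ1 γ2 μ1 μ2 : ℝ)
    (hβ11 : 0 < β11) (hβ12 : 0 < β12) (hβ21 : 0 < β21) (hβ22 : 0 < β22)
    (hγ1 : 0 < γ1) (hγ2 : 0 < γ2) (hμ1 : 0 < μ1) (hμ2 : 0 < μ2)
    (S1 S2 I1 I2 R1 R2 D1 D2 N1 N2 : ℝ → ℝ)
    (hN1 : ∀ t, N1 t = S1 t + I1 t + R1 t)
    (hN2 : ∀ t, N2 t = S2 t + I2 t + R2 t)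
    (hS1' : ∀ t ≥ (0:ℝ), HasDerivAt S1 (-(β11 * I1 t / N1 t + β12 * I2 t / N2 t) * S1 t) t)
    (hS2' : ∀ t ≥ (0:ℝ), HasDerivAt S2 (-(β21 * I1 t / N1 t + β22 * I2 t / N2 t) * S2 t) t)
    (hI1' : ∀ t ≥ (0:ℝ), HasDerivAt I1 ((β11 * I1 t / N1 t + β12 * I2 t / N2 t) * S1 t - (γ1 + μ1) * I1 t) t)
    (hI2' : ∀ t ≥ (0:ℝ), HasDerivAt I2 ((β21 * I1 t / N1 t + β22 * I2 t / N2 t) * S2 t - (γ2 + μ2) * I2 t) t)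
    (hR1' : ∀ t ≥ (0:ℝ), HasDerivAt R1 (γ1 * I1 t) t)
    (hR2' : ∀ t ≥ (0:ℝ), HasDerivAt R2 (γ2 * I2 t) t)
    (hD1' : ∀ t ≥ (0:ℝ), HasDerivAt D1 (μ1 * I1 t) t)
    (hD2' : ∀ t ≥ (0:ℝ), HasDerivAt D2 (μ2 * I2 t) t)
    (hS10 : 0 < S1 0) (hS20 : 0 < S2 0)
    (hI10 : 0 ≤ I1 0) (hI20 : 0 ≤ I2 0)
    (hR10 : 0 ≤ R1 0) (hR20 : 0 ≤ R2 0)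
    (hD10 : 0 ≤ D1 0) (hD20 : 0 ≤ D2 0)
    (hnn1 : ∀ t ≥ (0:ℝ), 0 ≤ S1 t ∧ 0 ≤ I1 t ∧ 0 ≤ R1 t ∧ 0 ≤ D1 t)
    (hnn2 : ∀ t ≥ (0:ℝ), 0 ≤ S2 t ∧ 0 ≤ I2 t ∧ 0 ≤ R2 t ∧ 0 ≤ D2 t)
    (hbd : ∃ C : ℝ, ∀ t ≥ (0:ℝ), S1 t ≤ C ∧ I1 t ≤ C ∧ R1 t ≤ C ∧ D1 t ≤ C ∧
      S2 t ≤ C ∧ I2 t ≤ C ∧ R2 t ≤ C ∧ D2 t ≤ C)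
    (hS1pos : ∀ t ≥ (0:ℝ), 0 < S1 t)
    (hS2pos : ∀ t ≥ (0:ℝ), 0 < S2 t)
    (hN1pos : ∀ t ≥ (0:ℝ), 0 < N1 t)
    (hN2pos : ∀ t ≥ (0:ℝ), 0 < N2 t)
    (ε1 ε2 Z1 Z2 : ℝ)
    (hε1 : ε1 = μ1 / (γ1 + μ1)) (hε2 : ε2 = μ2 / (γ2 + μ2))
    (hZ1 : Z1 = (1 - ε1) * N1 0 + ε1 * R1 0) (hZ2 : Z2 = (1 - ε2) * N2 0 + ε2 * R2 0)
    (T : ℝ × ℝ → ℝ × ℝ)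
    (hT : T = Tmap β11 β12 β21 β22 μ1 μ2 (S1 0) (S2 0) ε1 ε2 Z1 Z2 (N1 0) (N2 0))
    (S1inf S2inf : ℝ)
    (hS1inf : Tendsto S1 atTop (nhds S1inf)) (hS2inf : Tendsto S2 atTop (nhds S2inf))
    (hI1inf : Tendsto I1 atTop (nhds 0)) (hI2inf : Tendsto I2 atTop (nhds 0))
    (hR1inf : ∃ l : ℝ, Tendsto R1 atTop (nhds l)) (hR2inf : ∃ l : ℝ, Tendsto R2 atTop (nhds l))
    (hD1inf : ∃ l : ℝ, Tendsto D1 atTop (nhds l)) (hD2inf : ∃ l : ℝ, Tendsto D2 atTop (nhds l)) :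
    T (S1inf, S2inf) = (S1inf, S2inf) ∧
    (0 < S1inf ∧ S1inf ≤ S1 0) ∧ (0 < S2inf ∧ S2inf ≤ S2 0) := by
  obtain ⟨R1l, hR1l⟩ := hR1inf
  obtain ⟨R2l, hR2l⟩ := hR2inf
  obtain ⟨D1l, hD1l⟩ := hD1inf
  obtain ⟨D2l, hD2l⟩ := hD2inf
  have hN1fun : N1 = fun t => S1 t + I1 t + R1 t := funext hN1
  have hN2fun : N2 = fun t => S2 t + I2 t + R2 t := funext hN2
  have hN10 : 0 < N1 0 := hN1pos 0 le_rfl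
  have hN20 : 0 < N2 0 := hN2pos 0 le_rfl
  -- derivatives of N
  have hN1' : ∀ t ≥ (0:ℝ), HasDerivAt N1 (-(μ1 * I1 t)) t := by
    intro t ht
    rw [hN1fun]
    have h := ((hS1' t ht).add (hI1' t ht)).add (hR1' t ht)
    convert h using 1
    · rfl
    · rfl
    · rfl
    ring
  have hN2' : ∀ t ≥ (0:ℝ), HasDerivAt N2 (-(μ2 * I2 t)) t := by
    intro t ht
    rw [hN2fun]
    have h := ((hS2' t ht).add (hI2' t ht)).add (hR2' t ht)
    convert h using 1
    · rfl
    · rfl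
    · rfl
    ring
  -- limits of N
  set N1L : ℝ := S1inf + R1l with hN1Ldef
  set N2L : ℝ := S2inf + R2l with hN2Ldef
  have hN1tend : Tendsto N1 atTop (nhds N1L) := by
    rw [hN1fun]
    have := (hS1inf.add hI1inf).add hR1l
    simpa using this
  have hN2tend : Tendsto N2 atTop (nhds N2L) := by
    rw [hN2fun]
    have := (hS2inf.add hI2inf).add hR2l
    simpa using this
  -- conservation laws
  have hc1 : ∀ t ≥ (0:ℝ), N1 t + D1 t = N1 0 + D1 0 := by
    apply sird_const
    intro t ht
    have h := (hN1' t ht).add (hD1' t ht)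
    convert h using 1
    · rfl
    · rfl
    · rfl
    ring
  have hc2 : ∀ t ≥ (0:ℝ), N2 t + D2 t = N2 0 + D2 0 := by
    apply sird_const
    intro t ht
    have h := (hN2' t ht).add (hD2' t ht)
    convert h using 1
    · rfl
    · rfl
    · rfl
    ring
  have hc3 : ∀ t ≥ (0:ℝ), μ1 * R1 t - γ1 * D1 t = μ1 * R1 0 - γ1 * D1 0 := by
    apply sird_const
    intro t ht
    have h := ((hR1' t ht).const_mul μ1).sub ((hD1' t ht).const_mul γ1)
    convert h using 1
    · rfl
    · rfl
    · rfl
    ring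
  have hc4 : ∀ t ≥ (0:ℝ), μ2 * R2 t - γ2 * D2 t = μ2 * R2 0 - γ2 * D2 0 := by
    apply sird_const
    intro t ht
    have h := ((hR2' t ht).const_mul μ2).sub ((hD2' t ht).const_mul γ2)
    convert h using 1
    · rfl
    · rfl
    · rfl
    ring
  have he1 : N1L + D1l = N1 0 + D1 0 :=
    tendsto_nhds_unique (hN1tend.add hD1l) (sird_tendsto_const hc1)
  have he2 : N2L + D2l = N2 0 + D2 0 :=
    tendsto_nhds_unique (hN2tend.add hD2l) (sird_tendsto_const hc2)
  have he3 : μ1 * R1l - γ1 * D1l = μ1 * R1 0 - γ1 * D1 0 :=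
    tendsto_nhds_unique ((hR1l.const_mul μ1).sub (hD1l.const_mul γ1)) (sird_tendsto_const hc3)
  have he4 : μ2 * R2l - γ2 * D2l = μ2 * R2 0 - γ2 * D2 0 :=
    tendsto_nhds_unique ((hR2l.const_mul μ2).sub (hD2l.const_mul γ2)) (sird_tendsto_const hc4)
  -- N∞ = ε S∞ + Z
  have hγμ1 : γ1 + μ1 ≠ 0 := by positivity
  have hγμ2 : γ2 + μ2 ≠ 0 := by positivity
  have hNL1 : N1L = ε1 * S1inf + Z1 := by
    have h3 : N1L = S1inf + R1l := hN1Ldef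
    have key : N1L * (γ1 + μ1) = μ1 * S1inf + (γ1 * N1 0 + μ1 * R1 0) := by
      linear_combination μ1 * h3 + he3 + γ1 * he1
    rw [hZ1, hε1]
    field_simp
    linear_combination key
  have hNL2 : N2L = ε2 * S2inf + Z2 := by
    have h3 : N2L = S2inf + R2l := hN2Ldef
    have key : N2L * (γ2 + μ2) = μ2 * S2inf + (γ2 * N2 0 + μ2 * R2 0) := by
      linear_combination μ2 * h3 + he4 + γ2 * he2
    rw [hZ2, hε2]
    field_simp
    linear_combination key
  -- positivity of limits
  have hS1inf_nn : 0 ≤ S1inf :=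
    ge_of_tendsto hS1inf ((eventually_ge_atTop (0:ℝ)).mono fun t ht => (hnn1 t ht).1)
  have hS2inf_nn : 0 ≤ S2inf :=
    ge_of_tendsto hS2inf ((eventually_ge_atTop (0:ℝ)).mono fun t ht => (hnn2 t ht).1)
  have hε1pos : 0 < ε1 := by rw [hε1]; positivity
  have hε2pos : 0 < ε2 := by rw [hε2]; positivity
  have h1ε1 : 1 - ε1 = γ1 / (γ1 + μ1) := by rw [hε1]; field_simp; ring
  have h1ε2 : 1 - ε2 = γ2 / (γ2 + μ2) := by rw [hε2]; field_simp; ring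
  have hZ1pos : 0 < Z1 := by
    rw [hZ1, h1ε1]
    have h : 0 < γ1 / (γ1 + μ1) * N1 0 := by positivity
    exact add_pos_of_pos_of_nonneg h (mul_nonneg hε1pos.le hR10)
  have hZ2pos : 0 < Z2 := by
    rw [hZ2, h1ε2]
    have h : 0 < γ2 / (γ2 + μ2) * N2 0 := by positivity
    exact add_pos_of_pos_of_nonneg h (mul_nonneg hε2pos.le hR20)
  have hN1Lpos : 0 < N1L := by
    rw [hNL1]; exact add_pos_of_nonneg_of_pos (mul_nonneg hε1pos.le hS1inf_nn) hZ1pos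
  have hN2Lpos : 0 < N2L := by
    rw [hNL2]; exact add_pos_of_nonneg_of_pos (mul_nonneg hε2pos.le hS2inf_nn) hZ2pos
  -- the log integrals
  have hμ1ne : μ1 ≠ 0 := hμ1.ne'
  have hμ2ne : μ2 ≠ 0 := hμ2.ne'
  have hF1 : ∀ t ≥ (0:ℝ), HasDerivAt
      (fun t => Real.log (S1 t) - β11 / μ1 * Real.log (N1 t) - β12 / μ2 * Real.log (N2 t)) 0 t := by
    intro t ht
    have hS1ne := (hS1pos t ht).ne'
    have hN1ne := (hN1pos t ht).ne'
    have hN2ne := (hN2pos t ht).ne'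
    have d1 := (hS1' t ht).log hS1ne
    have d2 := ((hN1' t ht).log hN1ne).const_mul (β11 / μ1)
    have d3 := ((hN2' t ht).log hN2ne).const_mul (β12 / μ2)
    have h := (d1.sub d2).sub d3
    convert h using 1
    · rfl
    · rfl
    · rfl
    field_simp
    ring
  have hF2 : ∀ t ≥ (0:ℝ), HasDerivAt
      (fun t => Real.log (S2 t) - β21 / μ1 * Real.log (N1 t) - β22 / μ2 * Real.log (N2 t)) 0 t := by
    intro t ht
    have hS2ne := (hS2pos t ht).ne'
    have hN1ne := (hN1pos t ht).ne'
    have hN2ne := (hN2pos t ht).ne'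
    have d1 := (hS2' t ht).log hS2ne
    have d2 := ((hN1' t ht).log hN1ne).const_mul (β21 / μ1)
    have d3 := ((hN2' t ht).log hN2ne).const_mul (β22 / μ2)
    have h := (d1.sub d2).sub d3
    convert h using 1
    · rfl
    · rfl
    · rfl
    field_simp
    ring
  have hF1c := sird_const hF1
  have hF2c := sird_const hF2
  -- limits of log N
  have hlogN1 : Tendsto (fun t => Real.log (N1 t)) atTop (nhds (Real.log N1L)) :=
    ((Real.continuousAt_log hN1Lpos.ne').tendsto).comp hN1tend
  have hlogN2 : Tendsto (fun t => Real.log (N2 t)) atTop (nhds (Real.log N2L)) :=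
    ((Real.continuousAt_log hN2Lpos.ne').tendsto).comp hN2tend
  set C1 : ℝ := Real.log (S1 0) - β11 / μ1 * Real.log (N1 0) - β12 / μ2 * Real.log (N2 0) with hC1
  set C2 : ℝ := Real.log (S2 0) - β21 / μ1 * Real.log (N1 0) - β22 / μ2 * Real.log (N2 0) with hC2
  set L1 : ℝ := C1 + β11 / μ1 * Real.log N1L + β12 / μ2 * Real.log N2L with hL1
  set L2 : ℝ := C2 + β21 / μ1 * Real.log N1L + β22 / μ2 * Real.log N2L with hL2
  have hlogS1 : Tendsto (fun t => Real.log (S1 t)) atTop (nhds L1) := by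
    have h := (tendsto_const_nhds : Tendsto (fun _ : ℝ => C1) atTop (nhds C1)).add
      ((hlogN1.const_mul (β11 / μ1)).add (hlogN2.const_mul (β12 / μ2)))
    refine Tendsto.congr' ?_ (by convert h using 2; rw [hL1]; ring)
    filter_upwards [eventually_ge_atTop (0:ℝ)] with t ht
    have := hF1c t ht
    rw [hC1]
    linarith
  have hlogS2 : Tendsto (fun t => Real.log (S2 t)) atTop (nhds L2) := by
    have h := (tendsto_const_nhds : Tendsto (fun _ : ℝ => C2) atTop (nhds C2)).add
      ((hlogN1.const_mul (β21 / μ1)).add (hlogN2.const_mul (β22 / μ2)))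
    refine Tendsto.congr' ?_ (by convert h using 2; rw [hL2]; ring)
    filter_upwards [eventually_ge_atTop (0:ℝ)] with t ht
    have := hF2c t ht
    rw [hC2]
    linarith
  have hS1exp : Tendsto S1 atTop (nhds (Real.exp L1)) := by
    refine Tendsto.congr' ?_ ((Real.continuous_exp.tendsto _).comp hlogS1)
    filter_upwards [eventually_ge_atTop (0:ℝ)] with t ht
    simp only [Function.comp_apply]
    exact Real.exp_log (hS1pos t ht)
  have hS2exp : Tendsto S2 atTop (nhds (Real.exp L2)) := by
    refine Tendsto.congr' ?_ ((Real.continuous_exp.tendsto _).comp hlogS2)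
    filter_upwards [eventually_ge_atTop (0:ℝ)] with t ht
    simp only [Function.comp_apply]
    exact Real.exp_log (hS2pos t ht)
  have hS1eq : S1inf = Real.exp L1 := tendsto_nhds_unique hS1inf hS1exp
  have hS2eq : S2inf = Real.exp L2 := tendsto_nhds_unique hS2inf hS2exp
  have hS1infpos : 0 < S1inf := hS1eq ▸ Real.exp_pos L1
  have hS2infpos : 0 < S2inf := hS2eq ▸ Real.exp_pos L2
  -- antitone : S∞ ≤ S0
  have hanti1 : AntitoneOn S1 (Set.Ici (0:ℝ)) := by
    apply antitoneOn_of_deriv_nonpos (convex_Ici 0)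
    · intro x hx; exact (hS1' x hx).continuousAt.continuousWithinAt
    · intro x hx
      rw [interior_Ici] at hx
      exact ((hS1' x hx.le).differentiableAt).differentiableWithinAt
    · intro x hx
      rw [interior_Ici] at hx
      rw [(hS1' x hx.le).deriv]
      have h1 : 0 ≤ β11 * I1 x / N1 x :=
        div_nonneg (mul_nonneg hβ11.le (hnn1 x hx.le).2.1) (hN1pos x hx.le).le
      have h2 : 0 ≤ β12 * I2 x / N2 x :=
        div_nonneg (mul_nonneg hβ12.le (hnn2 x hx.le).2.1) (hN2pos x hx.le).le
      have := mul_nonneg (add_nonneg h1 h2) (hS1pos x hx.le).le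
      linarith
  have hanti2 : AntitoneOn S2 (Set.Ici (0:ℝ)) := by
    apply antitoneOn_of_deriv_nonpos (convex_Ici 0)
    · intro x hx; exact (hS2' x hx).continuousAt.continuousWithinAt
    · intro x hx
      rw [interior_Ici] at hx
      exact ((hS2' x hx.le).differentiableAt).differentiableWithinAt
    · intro x hx
      rw [interior_Ici] at hx
      rw [(hS2' x hx.le).deriv]
      have h1 : 0 ≤ β21 * I1 x / N1 x :=
        div_nonneg (mul_nonneg hβ21.le (hnn1 x hx.le).2.1) (hN1pos x hx.le).le
      have h2 : 0 ≤ β22 * I2 x / N2 x :=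
        div_nonneg (mul_nonneg hβ22.le (hnn2 x hx.le).2.1) (hN2pos x hx.le).le
      have := mul_nonneg (add_nonneg h1 h2) (hS2pos x hx.le).le
      linarith
  have hS1le : S1inf ≤ S1 0 :=
    le_of_tendsto hS1inf ((eventually_ge_atTop (0:ℝ)).mono fun t ht =>
      hanti1 (Set.mem_Ici.2 le_rfl) (Set.mem_Ici.2 ht) ht)
  have hS2le : S2inf ≤ S2 0 :=
    le_of_tendsto hS2inf ((eventually_ge_atTop (0:ℝ)).mono fun t ht =>
      hanti2 (Set.mem_Ici.2 le_rfl) (Set.mem_Ici.2 ht) ht)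
  -- fixed point equation
  refine ⟨?_, ⟨hS1infpos, hS1le⟩, ⟨hS2infpos, hS2le⟩⟩
  rw [hT]
  simp only [Tmap]
  have hr1 : (0:ℝ) < N1L / N1 0 := div_pos hN1Lpos hN10
  have hr2 : (0:ℝ) < N2L / N2 0 := div_pos hN2Lpos hN20
  have key1 : ε1 * S1inf + Z1 = N1L := hNL1.symm
  have key2 : ε2 * S2inf + Z2 = N2L := hNL2.symm
  have hpow1 : ∀ a : ℝ, (N1L / N1 0) ^ a = Real.exp (a * (Real.log N1L - Real.log (N1 0))) := by
    intro a
    rw [Real.rpow_def_of_pos hr1, Real.log_div hN1Lpos.ne' hN10.ne']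
    ring_nf
  have hpow2 : ∀ a : ℝ, (N2L / N2 0) ^ a = Real.exp (a * (Real.log N2L - Real.log (N2 0))) := by
    intro a
    rw [Real.rpow_def_of_pos hr2, Real.log_div hN2Lpos.ne' hN20.ne']
    ring_nf
  have hS10exp : S1 0 = Real.exp (Real.log (S1 0)) := (Real.exp_log hS10).symm
  have hS20exp : S2 0 = Real.exp (Real.log (S2 0)) := (Real.exp_log hS20).symm
  have eq1 : S1 0 * ((ε1 * S1inf + Z1) / N1 0) ^ (β11 / μ1) *
      ((ε2 * S2inf + Z2) / N2 0) ^ (β12 / μ2) = S1inf := by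
    rw [key1, key2, hpow1, hpow2, hS1eq]
    rw [hS10exp, ← Real.exp_add, ← Real.exp_add]
    congr 1
    rw [hL1, hC1]
    ring
  have eq2 : S2 0 * ((ε1 * S1inf + Z1) / N1 0) ^ (β21 / μ1) *
      ((ε2 * S2inf + Z2) / N2 0) ^ (β22 / μ2) = S2inf := by
    rw [key1, key2, hpow1, hpow2, hS2eq]
    rw [hS20exp, ← Real.exp_add, ← Real.exp_add]
    congr 1
    rw [hL2, hC2]
    ring
  exact Prod.ext eq1 eq2
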